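/- Assume σγ₀τ₃ < τ₁τ_Sλ_M and all parameters r₁, r₂, γ₀, σ, α₁, α₂, M̂, λ_M, τ₁, τ₂, τ₃, τ_S, C, τ_p positive, n ≥ 1. Then there exists d̃ > 0 such that for all 0 < d < d̃, the steady-state system r₁m² = γ₀u, γ₀u = τ_p u_p, τ_S I/(1+Cuⁿ) = dm + r₂um + r₁m², (α₁u/(1+α₂u))(M̂−M)M − σM + λ_M = 0, τ₁uM/(1+τ₂u) = τ₃I admits at least two solutions with all five components strictly positive. -/

import Mathlib

private lemma quad_aux (a b c : ℝ) (ha : 0 < a) (hc : 0 < c) :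
    a * ((-b + Real.sqrt (b ^ 2 + 4 * a * c)) / (2 * a)) ^ 2
      + b * ((-b + Real.sqrt (b ^ 2 + 4 * a * c)) / (2 * a)) - c = 0 ∧
    0 < (-b + Real.sqrt (b ^ 2 + 4 * a * c)) / (2 * a) := by
  have hD : (0:ℝ) ≤ b ^ 2 + 4 * a * c := by nlinarith
  have hs2 : Real.sqrt (b ^ 2 + 4 * a * c) ^ 2 = b ^ 2 + 4 * a * c := Real.sq_sqrt hD
  have hbs : b < Real.sqrt (b ^ 2 + 4 * a * c) := by
    have h1 : Real.sqrt (b ^ 2) < Real.sqrt (b ^ 2 + 4 * a * c) :=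
      Real.sqrt_lt_sqrt (sq_nonneg b) (by nlinarith)
    have h2 := Real.sqrt_sq_eq_abs b
    have h3 := le_abs_self b
    linarith [h2.le, h2.ge]
  refine ⟨?_, div_pos (by linarith) (by linarith)⟩
  have h2a : (2 * a) ≠ 0 := by positivity
  field_simp
  ring_nf at hs2 ⊢
  nlinarith [hs2]

set_option maxHeartbeats 2000000 in
theorem stmt_14
    (r₁ r₂ γ₀ σ α₁ α₂ Mhat lamM τ₁ τ₂ τ₃ τS C τp : ℝ) (n : ℕ)
    (hr₁ : 0 < r₁) (hr₂ : 0 < r₂) (hγ₀ : 0 < γ₀) (hσ : 0 < σ) (hα₁ : 0 < α₁)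
    (hα₂ : 0 < α₂) (hM : 0 < Mhat) (hlam : 0 < lamM) (hτ₁ : 0 < τ₁)
    (hτ₂ : 0 < τ₂) (hτ₃ : 0 < τ₃) (hτS : 0 < τS) (hC : 0 < C) (hτp : 0 < τp)
    (hn : 1 ≤ n)
    (hcond : σ * γ₀ * τ₃ < τ₁ * τS * lamM) :
    ∃ dt > (0:ℝ), ∀ d : ℝ, 0 < d → d < dt →
      ∃ s₁ s₂ : ℝ × ℝ × ℝ × ℝ × ℝ, s₁ ≠ s₂ ∧
        ∀ s ∈ ({s₁, s₂} : Set (ℝ × ℝ × ℝ × ℝ × ℝ)),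
          0 < s.1 ∧ 0 < s.2.1 ∧ 0 < s.2.2.1 ∧ 0 < s.2.2.2.1 ∧ 0 < s.2.2.2.2 ∧
          r₁ * s.2.2.1^2 = γ₀ * s.1 ∧
          γ₀ * s.1 = τp * s.2.1 ∧
          τS * s.2.2.2.2 / (1 + C * s.1^n)
            = d * s.2.2.1 + r₂ * s.1 * s.2.2.1 + r₁ * s.2.2.1^2 ∧
          (α₁ * s.1 / (1 + α₂ * s.1)) * (Mhat - s.2.2.2.1) * s.2.2.2.1
            - σ * s.2.2.2.1 + lamM = 0 ∧
          τ₁ * s.1 * s.2.2.2.1 / (1 + τ₂ * s.1) = τ₃ * s.2.2.2.2 := by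
  have hn0 : n ≠ 0 := by omega
  set B : ℝ := Mhat + lamM / σ with hB
  have hBpos : 0 < B := by positivity
  set U : ℝ → ℝ := fun m => r₁ * m ^ 2 / γ₀ with hU
  set A : ℝ → ℝ := fun m => α₁ * U m / (1 + α₂ * U m) with hA
  set bb : ℝ → ℝ := fun m => σ - A m * Mhat with hbb
  set MM : ℝ → ℝ := fun m =>
    (-(bb m) + Real.sqrt (bb m ^ 2 + 4 * A m * lamM)) / (2 * A m) with hMM
  set II : ℝ → ℝ := fun m => τ₁ * U m * MM m / (τ₃ * (1 + τ₂ * U m)) with hII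
  set FF : ℝ → ℝ := fun m => τS * II m / (1 + C * (U m) ^ n) with hFF
  set PP : ℝ → ℝ := fun m => r₁ * m ^ 2 + r₂ * U m * m with hPP
  clear_value B U A bb MM II FF PP
  -- basic positivity facts
  have hUpos : ∀ m : ℝ, 0 < m → 0 < U m := by
    intro m hm; simp only [hU]; positivity
  have hUnneg : ∀ m : ℝ, 0 ≤ U m := by
    intro m; simp only [hU]; positivity
  have hden1 : ∀ m : ℝ, 0 < 1 + α₂ * U m := by
    intro m; nlinarith [hUnneg m]
  have hden2 : ∀ m : ℝ, 0 < 1 + τ₂ * U m := by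
    intro m; nlinarith [hUnneg m]
  have hden3 : ∀ m : ℝ, 0 < 1 + C * (U m) ^ n := by
    intro m; nlinarith [pow_nonneg (hUnneg m) n]
  have hApos : ∀ m : ℝ, 0 < m → 0 < A m := by
    intro m hm; simp only [hA]
    exact div_pos (mul_pos hα₁ (hUpos m hm)) (hden1 m)
  have hAub : ∀ m : ℝ, 0 < m → A m ≤ α₁ * U m := by
    intro m hm; simp only [hA]
    exact div_le_self (mul_nonneg hα₁.le (hUnneg m)) (by nlinarith [hUpos m hm])
  have hquad : ∀ m : ℝ, 0 < m →
      A m * MM m ^ 2 + bb m * MM m - lamM = 0 ∧ 0 < MM m := by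
    intro m hm
    have := quad_aux (A m) (bb m) lamM (hApos m hm) hlam
    simp only [hMM]
    exact this
  have hMub : ∀ m : ℝ, 0 < m → MM m ≤ B := by
    intro m hm
    obtain ⟨hq, hMpos⟩ := hquad m hm
    simp only [hbb] at hq
    rcases le_or_gt (MM m) Mhat with h | h
    · have : 0 < lamM / σ := by positivity
      rw [hB]; linarith
    · have h1 : 0 ≤ A m * MM m * (MM m - Mhat) :=
        mul_nonneg (mul_nonneg (hApos m hm).le hMpos.le) (by linarith)
      have h2 : σ * MM m ≤ lamM := by nlinarith
      have h3 : MM m ≤ lamM / σ := by rw [le_div_iff₀ hσ]; linarith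
      rw [hB]; linarith
  have hMlb : ∀ m : ℝ, 0 < m → (lamM - α₁ * U m * B ^ 2) / σ ≤ MM m := by
    intro m hm
    obtain ⟨hq, hMpos⟩ := hquad m hm
    simp only [hbb] at hq
    rw [div_le_iff₀ hσ]
    have h1 : 0 ≤ A m * MM m * Mhat :=
      mul_nonneg (mul_nonneg (hApos m hm).le hMpos.le) hM.le
    have h2 : A m * MM m ^ 2 ≤ α₁ * U m * B ^ 2 := by
      have hMB : MM m ^ 2 ≤ B ^ 2 := by nlinarith [hMub m hm, hMpos]
      calc A m * MM m ^ 2 ≤ (α₁ * U m) * B ^ 2 :=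
            mul_le_mul (hAub m hm) hMB (sq_nonneg _)
              (mul_nonneg hα₁.le (hUnneg m))
        _ = α₁ * U m * B ^ 2 := by ring
    nlinarith [hq, h1, h2]
  -- continuity
  have hUc : Continuous U := by
    rw [hU]; exact (continuous_const.mul (continuous_pow 2)).div_const γ₀
  have hAc : ContinuousOn A (Set.Ioi 0) := by
    rw [hA]
    exact ContinuousOn.div (continuous_const.mul hUc).continuousOn
      (continuous_const.add (continuous_const.mul hUc)).continuousOn
      (fun m _ => (hden1 m).ne')
  have hbbc : ContinuousOn bb (Set.Ioi 0) := by
    rw [hbb]; exact continuousOn_const.sub (hAc.mul continuousOn_const)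
  have hMMc : ContinuousOn MM (Set.Ioi 0) := by
    rw [hMM]
    refine ContinuousOn.div (hbbc.neg.add ?_) (continuousOn_const.mul hAc)
      (fun m hm => (mul_pos two_pos (hApos m hm)).ne')
    exact ((hbbc.pow 2).add ((continuousOn_const.mul hAc).mul continuousOn_const)).sqrt
  have hIIc : ContinuousOn II (Set.Ioi 0) := by
    rw [hII]
    exact ContinuousOn.div ((continuous_const.mul hUc).continuousOn.mul hMMc)
      (continuous_const.mul (continuous_const.add (continuous_const.mul hUc))).continuousOn
      (fun m _ => (mul_pos hτ₃ (hden2 m)).ne')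
  have hFFc : ContinuousOn FF (Set.Ioi 0) := by
    rw [hFF]
    exact ContinuousOn.div (continuousOn_const.mul hIIc)
      (continuous_const.add (continuous_const.mul (hUc.pow n))).continuousOn
      (fun m _ => (hden3 m).ne')
  have hPPc : Continuous PP := by
    rw [hPP]
    exact (continuous_const.mul (continuous_pow 2)).add
      ((continuous_const.mul hUc).mul continuous_id)
  -- FF as product
  have hFFeq : ∀ m : ℝ, 0 < m → FF m =
      (τS * τ₁ * U m / (τ₃ * (1 + τ₂ * U m) * (1 + C * (U m) ^ n))) * MM m := by
    intro m hm
    simp only [hFF, hII]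
    rw [mul_div_assoc', div_div, div_mul_eq_mul_div]
    congr 1
    ring
  have hccpos : ∀ m : ℝ, 0 < m →
      0 < τS * τ₁ * U m / (τ₃ * (1 + τ₂ * U m) * (1 + C * (U m) ^ n)) := by
    intro m hm
    exact div_pos (mul_pos (mul_pos hτS hτ₁) (hUpos m hm))
      (mul_pos (mul_pos hτ₃ (hden2 m)) (hden3 m))
  have hu : ∀ m : ℝ, U m = r₁ * m ^ 2 / γ₀ := fun m => by rw [hU]
  -- lower bound for FF
  set ψ : ℝ → ℝ := fun m =>
    τS * τ₁ * (r₁ / γ₀) * (lamM - α₁ * U m * B ^ 2)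
      / (σ * τ₃ * (1 + τ₂ * U m) * (1 + C * U m ^ n)) with hψ
  have hFlb : ∀ m : ℝ, 0 < m → m ^ 2 * ψ m ≤ FF m := by
    intro m hm
    rw [hFFeq m hm]
    have h1 : (τS * τ₁ * U m / (τ₃ * (1 + τ₂ * U m) * (1 + C * U m ^ n)))
        * ((lamM - α₁ * U m * B ^ 2) / σ)
        ≤ (τS * τ₁ * U m / (τ₃ * (1 + τ₂ * U m) * (1 + C * U m ^ n))) * MM m :=
      mul_le_mul_of_nonneg_left (hMlb m hm) (hccpos m hm).le
    refine le_trans (le_of_eq ?_) h1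
    simp only [hψ]
    rw [hu m]
    have e1 : (1 + τ₂ * (r₁ * m ^ 2 / γ₀)) ≠ 0 := by
      have := hden2 m; rw [hu m] at this; exact this.ne'
    have e2 : (1 + C * (r₁ * m ^ 2 / γ₀) ^ n) ≠ 0 := by
      have := hden3 m; rw [hu m] at this; exact this.ne'
    field_simp
  -- upper bounds for FF
  have hFub1 : ∀ m : ℝ, 0 < m → FF m ≤ (τS * τ₁ * (r₁ / γ₀) * B / τ₃) * m ^ 2 := by
    intro m hm
    rw [hFFeq m hm]
    have h1 : (τS * τ₁ * U m / (τ₃ * (1 + τ₂ * U m) * (1 + C * U m ^ n))) * MM m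
        ≤ (τS * τ₁ * U m / (τ₃ * (1 + τ₂ * U m) * (1 + C * U m ^ n))) * B :=
      mul_le_mul_of_nonneg_left (hMub m hm) (hccpos m hm).le
    have h2 : τS * τ₁ * U m / (τ₃ * (1 + τ₂ * U m) * (1 + C * U m ^ n))
        ≤ τS * τ₁ * U m / τ₃ := by
      apply div_le_div_of_nonneg_left
        (mul_nonneg (mul_nonneg hτS.le hτ₁.le) (hUnneg m)) hτ₃
      nlinarith [mul_nonneg hτ₃.le (mul_nonneg hC.le (pow_nonneg (hUnneg m) n)),
        mul_nonneg (mul_nonneg hτ₃.le hτ₂.le) (hUnneg m),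
        mul_nonneg (mul_nonneg (mul_nonneg hτ₃.le hτ₂.le)
          (mul_nonneg hC.le (hUnneg m))) (pow_nonneg (hUnneg m) n)]
    have h3 : (τS * τ₁ * U m / τ₃) * B = (τS * τ₁ * (r₁ / γ₀) * B / τ₃) * m ^ 2 := by
      rw [hu m]; ring
    nlinarith [hBpos]
  have hFub2 : ∀ m : ℝ, 0 < m → FF m ≤ τS * τ₁ * B / (τ₂ * τ₃) := by
    intro m hm
    rw [hFFeq m hm]
    have h1 : (τS * τ₁ * U m / (τ₃ * (1 + τ₂ * U m) * (1 + C * U m ^ n))) * MM m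
        ≤ (τS * τ₁ * U m / (τ₃ * (1 + τ₂ * U m) * (1 + C * U m ^ n))) * B :=
      mul_le_mul_of_nonneg_left (hMub m hm) (hccpos m hm).le
    have h2 : τS * τ₁ * U m / (τ₃ * (1 + τ₂ * U m) * (1 + C * U m ^ n))
        ≤ τS * τ₁ * U m / (τ₂ * τ₃ * U m) := by
      apply div_le_div_of_nonneg_left
        (mul_nonneg (mul_nonneg hτS.le hτ₁.le) (hUnneg m))
        (mul_pos (mul_pos hτ₂ hτ₃) (hUpos m hm))
      nlinarith [hτ₃, mul_nonneg hτ₃.le (mul_nonneg hC.le (pow_nonneg (hUnneg m) n)),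
        mul_nonneg (mul_nonneg (mul_nonneg hτ₃.le hτ₂.le)
          (mul_nonneg hC.le (hUnneg m))) (pow_nonneg (hUnneg m) n)]
    have h3 : (τS * τ₁ * U m / (τ₂ * τ₃ * U m)) * B = τS * τ₁ * B / (τ₂ * τ₃) := by
      have h0 := (hUpos m hm).ne'
      field_simp
    nlinarith [hBpos]
  -- the function φ and choice of m₀
  set φ : ℝ → ℝ := fun m => ψ m - r₁ - r₂ * (r₁ / γ₀) * m with hφ
  have hψc : ContinuousAt ψ 0 := by
    rw [hψ]
    apply ContinuousAt.div
    · exact (continuous_const.mul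
        (continuous_const.sub ((continuous_const.mul hUc).mul continuous_const))).continuousAt
    · exact ((continuous_const.mul
        (continuous_const.add (continuous_const.mul hUc))).mul
        (continuous_const.add (continuous_const.mul (hUc.pow n)))).continuousAt
    · have : 0 < σ * τ₃ * (1 + τ₂ * U 0) * (1 + C * U 0 ^ n) :=
        mul_pos (mul_pos (mul_pos hσ hτ₃) (hden2 0)) (hden3 0)
      exact this.ne'
  have hφc : ContinuousAt φ 0 := by
    rw [hφ]
    exact (hψc.sub continuousAt_const).sub
      (continuous_const.mul continuous_id).continuousAt
  have hU0 : U 0 = 0 := by rw [hu 0]; norm_num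
  have hφ0 : 0 < φ 0 := by
    have hψ0 : ψ 0 = τS * τ₁ * (r₁ / γ₀) * lamM / (σ * τ₃) := by
      simp only [hψ, hU0]
      rw [zero_pow hn0]
      norm_num
    have hkey : r₁ * (σ * τ₃) < τS * τ₁ * (r₁ / γ₀) * lamM := by
      rw [show τS * τ₁ * (r₁ / γ₀) * lamM = τS * τ₁ * r₁ * lamM / γ₀ by ring,
        lt_div_iff₀ hγ₀]
      nlinarith [mul_lt_mul_of_pos_left hcond hr₁]
    have h2 : r₁ < ψ 0 := by
      rw [hψ0, lt_div_iff₀ (by positivity)]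
      linarith
    simp only [hφ]
    norm_num
    linarith
  have hev : ∀ᶠ m in nhds (0:ℝ), 0 < φ m := hφc.eventually (eventually_gt_nhds hφ0)
  obtain ⟨δ, hδ, hball⟩ := Metric.eventually_nhds_iff.mp hev
  set m₀ : ℝ := δ / 2 with hm₀
  have hm₀pos : 0 < m₀ := by positivity
  have hφm₀ : 0 < φ m₀ := hball (by
    rw [Real.dist_eq, sub_zero, abs_of_pos hm₀pos]; rw [hm₀]; linarith)
  have hGm₀ : m₀ ^ 2 * φ m₀ ≤ FF m₀ - PP m₀ := by
    have h1 := hFlb m₀ hm₀pos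
    have h2 : m₀ ^ 2 * φ m₀ = m₀ ^ 2 * ψ m₀ - PP m₀ := by
      simp only [hφ, hPP]
      rw [hu m₀]
      ring
    linarith
  -- conclusion
  refine ⟨m₀ * φ m₀, by positivity, ?_⟩
  intro d hd hdlt
  set HH : ℝ → ℝ := fun m => FF m - PP m - d * m with hHH
  have hHHval : ∀ m : ℝ, HH m = FF m - PP m - d * m := fun m => by rw [hHH]
  have hHcont : ContinuousOn HH (Set.Ioi 0) := by
    rw [hHH]
    exact (hFFc.sub hPPc.continuousOn).sub
      (continuous_const.mul continuous_id).continuousOn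
  have hHm₀ : 0 < HH m₀ := by
    rw [hHHval]
    nlinarith [mul_lt_mul_of_pos_right hdlt hm₀pos]
  -- small root point
  set K₂ : ℝ := τS * τ₁ * (r₁ / γ₀) * B / τ₃ with hK₂
  have hK₂pos : 0 < K₂ := by rw [hK₂]; positivity
  set m₁ : ℝ := min (m₀ / 2) (d / (2 * K₂)) with hm₁
  have hm₁pos : 0 < m₁ := lt_min (by positivity) (by positivity)
  have hm₁le : m₁ ≤ m₀ := le_trans (min_le_left _ _) (by linarith)
  have hHm₁ : HH m₁ < 0 := by
    rw [hHHval]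
    have h1 := hFub1 m₁ hm₁pos
    have h2 : m₁ ≤ d / (2 * K₂) := min_le_right _ _
    have h3 : K₂ * m₁ ≤ d / 2 := by
      rw [le_div_iff₀ (by positivity)] at h2
      nlinarith
    have h4 : 0 ≤ PP m₁ := by
      simp only [hPP]
      exact add_nonneg (mul_nonneg hr₁.le (sq_nonneg m₁))
        (mul_nonneg (mul_nonneg hr₂.le (hUnneg m₁)) hm₁pos.le)
    nlinarith
  -- big root point
  set K₃ : ℝ := τS * τ₁ * B / (τ₂ * τ₃) with hK₃
  set m₂ : ℝ := m₀ + Real.sqrt (K₃ / r₁) + 1 with hm₂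
  have hsq := Real.sq_sqrt (show (0:ℝ) ≤ K₃ / r₁ by rw [hK₃]; positivity)
  have hsqn := Real.sqrt_nonneg (K₃ / r₁)
  have hm₀m₂ : m₀ ≤ m₂ := by rw [hm₂]; linarith
  have hm₂pos : 0 < m₂ := lt_of_lt_of_le hm₀pos hm₀m₂
  have hK₃m₂ : K₃ < r₁ * m₂ ^ 2 := by
    have hKval : K₃ = r₁ * Real.sqrt (K₃ / r₁) ^ 2 := by
      rw [hsq]; field_simp
    rw [hm₂]
    nlinarith [hm₀pos, hsqn, mul_pos hr₁ hm₀pos, mul_nonneg hr₁.le hsqn,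
      mul_pos hr₁ (mul_pos hm₀pos hm₀pos),
      mul_nonneg (mul_nonneg hr₁.le hm₀pos.le) hsqn]
  have hHm₂ : HH m₂ < 0 := by
    rw [hHHval]
    have h1 := hFub2 m₂ hm₂pos
    have h2 : r₁ * m₂ ^ 2 ≤ PP m₂ := by
      simp only [hPP]
      nlinarith [mul_nonneg (mul_nonneg hr₂.le (hUnneg m₂)) hm₂pos.le]
    nlinarith [mul_pos hd hm₂pos]
  -- two roots by IVT
  have hsub1 : Set.Icc m₁ m₀ ⊆ Set.Ioi 0 := fun x hx => lt_of_lt_of_le hm₁pos hx.1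
  obtain ⟨ma, hmaIcc, hma⟩ :=
    intermediate_value_Icc hm₁le (hHcont.mono hsub1) ⟨hHm₁.le, hHm₀.le⟩
  have hsub2 : Set.Icc m₀ m₂ ⊆ Set.Ioi 0 := fun x hx => lt_of_lt_of_le hm₀pos hx.1
  obtain ⟨mb, hmbIcc, hmb⟩ :=
    intermediate_value_Icc' hm₀m₂ (hHcont.mono hsub2) ⟨hHm₂.le, hHm₀.le⟩
  have hmapos : 0 < ma := lt_of_lt_of_le hm₁pos hmaIcc.1
  have hmbpos : 0 < mb := lt_of_lt_of_le hm₀pos hmbIcc.1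
  have hane : ma ≠ mb := by
    intro h
    have h1 : ma = m₀ := le_antisymm hmaIcc.2 (h ▸ hmbIcc.1)
    rw [h1] at hma
    rw [hma] at hHm₀
    exact lt_irrefl 0 hHm₀
  -- build solutions
  have main : ∀ m : ℝ, 0 < m → HH m = 0 →
      (0:ℝ) < U m ∧ 0 < γ₀ * U m / τp ∧ 0 < m ∧ 0 < MM m ∧ 0 < II m ∧
      r₁ * m ^ 2 = γ₀ * U m ∧
      γ₀ * U m = τp * (γ₀ * U m / τp) ∧
      τS * II m / (1 + C * (U m) ^ n) = d * m + r₂ * U m * m + r₁ * m ^ 2 ∧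
      (α₁ * U m / (1 + α₂ * U m)) * (Mhat - MM m) * MM m - σ * MM m + lamM = 0 ∧
      τ₁ * U m * MM m / (1 + τ₂ * U m) = τ₃ * II m := by
    intro m hm hH0
    obtain ⟨hq, hMpos⟩ := hquad m hm
    have hUm := hUpos m hm
    have hIIpos : 0 < II m := by
      simp only [hII]
      exact div_pos (mul_pos (mul_pos hτ₁ hUm) hMpos) (mul_pos hτ₃ (hden2 m))
    refine ⟨hUm, by positivity, hm, hMpos, hIIpos, ?_, ?_, ?_, ?_, ?_⟩
    · rw [hu m]; field_simp
    · field_simp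
    · rw [hHHval] at hH0
      simp only [hFF, hPP] at hH0 ⊢
      linarith
    · simp only [hbb, hA] at hq
      linear_combination (-1 : ℝ) * hq
    · simp only [hII]
      rw [eq_comm, mul_div_assoc', mul_div_mul_left _ _ hτ₃.ne']
  refine ⟨(U ma, γ₀ * U ma / τp, ma, MM ma, II ma),
    (U mb, γ₀ * U mb / τp, mb, MM mb, II mb), ?_, ?_⟩
  · intro h
    exact hane (congrArg (fun s : ℝ × ℝ × ℝ × ℝ × ℝ => s.2.2.1) h)
  · intro s hs
    have hs' : s = (U ma, γ₀ * U ma / τp, ma, MM ma, II ma) ∨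
        s = (U mb, γ₀ * U mb / τp, mb, MM mb, II mb) := hs
    rcases hs' with h | h <;> subst h
    · exact main ma hmapos hma
    · exact main mb hmbpos hmb
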